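/- For i ≤ d, two d-simplices of M_d are isomorphic in Fc_{W_d}(M) if and only if they are isomorphic in Fc_{W_i}(M); in particular, the isomorphism classes of d-simplices of M_d are the same computed in Fc_{W_d}(M) or in Fc_{W_0}(M). -/

import Mathlib

open CategoryTheory

structure Bisheaf (M : Type) [PartialOrder M] where
  shf : M ⥤ AddCommGrpCat
  csh : Mᵒᵖ ⥤ AddCommGrpCat
  F : ∀ σ : M, shf.obj σ ⟶ csh.obj (Opposite.op σ)
  compat : ∀ {σ τ : M} (h : σ ≤ τ),
    shf.map (homOfLE h) ≫ F τ ≫ csh.map (homOfLE h).op = F σ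

variable {M : Type} [PartialOrder M]

/-- The set `E` of face relations to which the bisheaf assigns isomorphisms. -/
def Bisheaf.E (B : Bisheaf M) (σ τ : M) : Prop :=
  ∃ h : σ ≤ τ, IsIso (B.shf.map (homOfLE h)) ∧ IsIso (B.csh.map (homOfLE h).op)

/-- The collection `W = {(σ ≤ τ) ∈ E | σ ∈ U}`, where
`U = {σ | (σ ≤ ρ) ∈ E for every ρ in the open star of σ}`. -/
def Bisheaf.W (B : Bisheaf M) (σ τ : M) : Prop :=
  σ ≤ τ ∧ ∀ ρ, σ ≤ ρ → B.E σ ρ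

/-- A relation on a poset, viewed as a morphism property on the face-poset category. -/
def mp (W : M → M → Prop) : MorphismProperty M := fun σ τ _ => W σ τ

/-- Two simplices are isomorphic in the localization `Fc_W(M)` of the face poset. -/
def isoIn (W : M → M → Prop) (σ τ : M) : Prop :=
  Nonempty ((mp W).Q.obj σ ≅ (mp W).Q.obj τ)

/-- `U` relative to a subcomplex `A`: simplices of `A` all of whose face relations
within the open star in `A` lie in `E`. -/
def Uof (E : M → M → Prop) (A : Set M) : Set M :=
  {σ | σ ∈ A ∧ ∀ τ ∈ A, σ ≤ τ → E σ τ}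

/-- Enlarge a collection of face relations by all relations out of members of
`Uof E A` into the open star within `A`. -/
def Wadd (E : M → M → Prop) (A : Set M) (Wp : M → M → Prop) : M → M → Prop :=
  fun σ τ => Wp σ τ ∨ (σ ∈ Uof E A ∧ τ ∈ A ∧ σ ≤ τ)

/-- One step of the iterative construction: delete from `P.1` all simplices
isomorphic in the localization about `P.2` to a `(d+1)`-dimensional simplex. -/
def stepM (dim : M → ℕ) (P : Set M × (M → M → Prop)) (d : ℕ) : Set M :=
  {σ | σ ∈ P.1 ∧ ¬ ∃ τ : M, dim τ = d + 1 ∧ isoIn P.2 σ τ}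

/-- One step `(M_{d+1}, W_{d+1}) ↦ (M_d, W_d)` of the iterative construction. -/
def step (E : M → M → Prop) (dim : M → ℕ) (P : Set M × (M → M → Prop)) (d : ℕ) :
    Set M × (M → M → Prop) :=
  (stepM dim P d, Wadd E (stepM dim P d) P.2)

/-- The iterative construction, indexed by the number `j` of steps performed:
`seq E dim m j = (M_{m-j}, W_{m-j})`, starting from `(M_m, W_m) = (M, W)`. -/
def seq (E : M → M → Prop) (dim : M → ℕ) (m : ℕ) : ℕ → Set M × (M → M → Prop)
  | 0 => (Set.univ, Wadd E Set.univ (fun _ _ => False))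
  | j + 1 => step E dim (seq E dim m j) (m - (j + 1))

/-- The subcomplex `M_d` of the iterative construction. -/
def Mseq (B : Bisheaf M) (dim : M → ℕ) (m d : ℕ) : Set M := (seq B.E dim m (m - d)).1

/-- The collection `W_d` of face relations of the iterative construction. -/
def Wseq (B : Bisheaf M) (dim : M → ℕ) (m d : ℕ) : M → M → Prop := (seq B.E dim m (m - d)).2

section Aux

variable {M : Type} [PartialOrder M]

/-! ### Localization utilities -/

lemma isoIn_refl (W : M → M → Prop) (σ : M) : isoIn W σ σ := ⟨Iso.refl _⟩

lemma isoIn_symm {W : M → M → Prop} {σ τ : M} (h : isoIn W σ τ) : isoIn W τ σ :=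
  ⟨h.some.symm⟩

lemma isoIn_trans {W : M → M → Prop} {σ τ ρ : M} (h : isoIn W σ τ) (h' : isoIn W τ ρ) :
    isoIn W σ ρ := ⟨h.some.trans h'.some⟩

/-- Transport an isomorphism in the localization along any functor inverting `W`. -/
lemma isoIn_map {W : M → M → Prop} {D : Type*} [Category D] (F : M ⥤ D)
    (hF : (mp W).IsInvertedBy F) {σ τ : M} (h : isoIn W σ τ) :
    Nonempty (F.obj σ ≅ F.obj τ) := by
  obtain ⟨e⟩ := h
  have hfac := Localization.Construction.fac F hF
  have h1 : (Localization.Construction.lift F hF).obj ((mp W).Q.obj σ) = F.obj σ :=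
    Functor.congr_obj hfac σ
  have h2 : (Localization.Construction.lift F hF).obj ((mp W).Q.obj τ) = F.obj τ :=
    Functor.congr_obj hfac τ
  exact ⟨(eqToIso h1).symm ≪≫ (Localization.Construction.lift F hF).mapIso e ≪≫ eqToIso h2⟩

lemma isoIn_of_W {W : M → M → Prop} {σ τ : M} (hle : σ ≤ τ) (hW : W σ τ) :
    isoIn W σ τ := by
  have : IsIso ((mp W).Q.map (homOfLE hle)) := (mp W).Q_inverts _ hW
  exact ⟨asIso ((mp W).Q.map (homOfLE hle))⟩

lemma isoIn_mono {W W' : M → M → Prop} (h : ∀ a b, W a b → W' a b) {σ τ : M}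
    (hi : isoIn W σ τ) : isoIn W' σ τ :=
  isoIn_map (mp W').Q (fun _ _ f hf => (mp W').Q_inverts f (h _ _ hf)) hi

/-! ### The reachability preorder -/

/-- Zigzag reachability: forward along face relations, backwards along `W`. -/
def ReachRel (W : M → M → Prop) : M → M → Prop :=
  Relation.ReflTransGen (fun a b => a ≤ b ∨ W b a)

/-- Type synonym for `M` carrying the reachability preorder. -/
def RPre (M : Type) (_ : M → M → Prop) : Type := M

instance (W : M → M → Prop) : Preorder (RPre M W) where
  le a b := ReachRel W a b
  le_refl _ := Relation.ReflTransGen.refl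
  le_trans _ _ _ h h' := Relation.ReflTransGen.trans h h'

lemma ReachRel.of_le {W : M → M → Prop} {a b : M} (h : a ≤ b) : ReachRel W a b :=
  Relation.ReflTransGen.single (Or.inl h)

lemma ReachRel.of_W {W : M → M → Prop} {a b : M} (h : W b a) : ReachRel W a b :=
  Relation.ReflTransGen.single (Or.inr h)

/-- The canonical functor from `M` to its reachability preorder. -/
def toRPre (W : M → M → Prop) : M ⥤ RPre M W :=
  Monotone.functor (f := fun x => (x : RPre M W))
    (fun _ _ h => (ReachRel.of_le h : ReachRel W _ _))

lemma reach_of_isoIn {W : M → M → Prop} {σ τ : M} (h : isoIn W σ τ) :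
    ReachRel W σ τ := by
  have hinv : (mp W).IsInvertedBy (toRPre W) := by
    intro a b f hf
    refine ⟨⟨homOfLE (ReachRel.of_W hf : ReachRel W b a), ?_, ?_⟩⟩ <;>
      exact Subsingleton.elim _ _
  obtain ⟨e⟩ := isoIn_map (toRPre W) hinv h
  exact (leOfHom e.hom : ReachRel W σ τ)

end Aux
section Seq

variable {M : Type} [PartialOrder M] (B : Bisheaf M) (dim : M → ℕ) (m : ℕ)

/-- The arrows added at stage `e` of the construction. -/
def Narrow (e : ℕ) (σ ρ : M) : Prop :=
  σ ∈ Uof B.E (Mseq B dim m e) ∧ ρ ∈ Mseq B dim m e ∧ σ ≤ ρ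

variable {B dim m}

lemma Mseq_eq_univ {d : ℕ} (hd : m ≤ d) : Mseq B dim m d = Set.univ := by
  unfold Mseq
  rw [Nat.sub_eq_zero_of_le hd]
  rfl

lemma Wseq_eq_base {d : ℕ} (hd : m ≤ d) :
    Wseq B dim m d = Wadd B.E Set.univ (fun _ _ => False) := by
  unfold Wseq
  rw [Nat.sub_eq_zero_of_le hd]
  rfl

lemma seq_md {d : ℕ} (hd : d < m) :
    seq B.E dim m (m - d) = step B.E dim (seq B.E dim m (m - (d + 1))) d := by
  have h1 : m - d = (m - (d + 1)) + 1 := by omega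
  rw [h1]
  show step B.E dim (seq B.E dim m (m - (d+1))) (m - (m - (d + 1) + 1)) = _
  congr 1
  omega

lemma mem_Mseq_iff {d : ℕ} (hd : d < m) {x : M} :
    x ∈ Mseq B dim m d ↔ x ∈ Mseq B dim m (d + 1) ∧
      ¬ ∃ τ : M, dim τ = d + 1 ∧ isoIn (Wseq B dim m (d + 1)) x τ := by
  unfold Mseq Wseq
  rw [seq_md hd]
  rfl

lemma Wseq_eq {d : ℕ} (hd : d < m) :
    Wseq B dim m d = Wadd B.E (Mseq B dim m d) (Wseq B dim m (d + 1)) := by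
  unfold Mseq Wseq
  rw [seq_md hd]
  rfl

lemma Mseq_subset_succ (d : ℕ) : Mseq B dim m d ⊆ Mseq B dim m (d + 1) := by
  rcases lt_or_ge d m with hd | hd
  · intro x hx
    exact ((mem_Mseq_iff hd).1 hx).1
  · rw [Mseq_eq_univ hd, Mseq_eq_univ (hd.trans (Nat.le_succ d))]

lemma Mseq_mono {d d' : ℕ} (h : d ≤ d') : Mseq B dim m d ⊆ Mseq B dim m d' := by
  induction d', h using Nat.le_induction with
  | base => exact subset_rfl
  | succ n hn ih => exact ih.trans (Mseq_subset_succ n)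

lemma Wseq_le_succ (d : ℕ) : ∀ σ τ : M, Wseq B dim m (d + 1) σ τ → Wseq B dim m d σ τ := by
  rcases lt_or_ge d m with hd | hd
  · intro σ τ h
    rw [Wseq_eq hd]
    exact Or.inl h
  · rw [Wseq_eq_base hd, Wseq_eq_base (hd.trans (Nat.le_succ d))]
    exact fun _ _ h => h

lemma Wseq_anti {d d' : ℕ} (h : d ≤ d') : ∀ σ τ : M, Wseq B dim m d' σ τ → Wseq B dim m d σ τ := by
  induction d', h using Nat.le_induction with
  | base => exact fun _ _ h => h
  | succ n hn ih => exact fun σ τ hw => ih σ τ (Wseq_le_succ n σ τ hw)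

lemma Wseq_iff {d : ℕ} (hd : d ≤ m) {σ ρ : M} :
    Wseq B dim m d σ ρ ↔ ∃ e, d ≤ e ∧ e ≤ m ∧ Narrow B dim m e σ ρ := by
  have key : ∀ k d, d ≤ m → m - d ≤ k →
      (Wseq B dim m d σ ρ ↔ ∃ e, d ≤ e ∧ e ≤ m ∧ Narrow B dim m e σ ρ) := by
    intro k
    induction k with
    | zero =>
      intro d hdm hk
      have hd : d = m := by omega
      rw [Wseq_eq_base hd.ge]
      constructor
      · rintro (h | h)
        · exact h.elim
        · refine ⟨m, hd.le, le_rfl, ?_, ?_, h.2.2⟩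
          · rw [Mseq_eq_univ le_rfl]
            exact h.1
          · rw [Mseq_eq_univ le_rfl]
            trivial
      · rintro ⟨e, hme, hem, hN⟩
        have he : e = m := le_antisymm hem (hd ▸ hme)
        subst he
        refine Or.inr ⟨?_, trivial, hN.2.2⟩
        have h1 := hN.1
        rwa [Mseq_eq_univ le_rfl] at h1
    | succ k ih =>
      intro d hdm hk
      rcases eq_or_lt_of_le hdm with hd | hd
      · exact ih d hdm (by omega)
      · rw [Wseq_eq hd]
        constructor
        · rintro (h | h)
          · obtain ⟨e, he1, he2, hN⟩ := (ih (d + 1) hd (by omega)).1 h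
            exact ⟨e, by omega, he2, hN⟩
          · exact ⟨d, le_rfl, hdm, h.1, h.2.1, h.2.2⟩
        · rintro ⟨e, he1, he2, hN⟩
          rcases eq_or_lt_of_le he1 with he | he
          · subst he
            exact Or.inr ⟨hN.1, hN.2.1, hN.2.2⟩
          · exact Or.inl ((ih (d + 1) hd (by omega)).2 ⟨e, he, he2, hN⟩)
  exact key (m - d) d hd le_rfl

lemma Wseq_of_narrow {d e : ℕ} (hde : d ≤ e) (hem : e ≤ m) {σ ρ : M}
    (h : Narrow B dim m e σ ρ) : Wseq B dim m d σ ρ :=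
  (Wseq_iff (hde.trans hem)).2 ⟨e, hde, hem, h⟩

lemma Wseq_le_rel {d : ℕ} (hd : d ≤ m) {σ ρ : M} (h : Wseq B dim m d σ ρ) : σ ≤ ρ := by
  obtain ⟨e, _, _, hN⟩ := (Wseq_iff hd).1 h
  exact hN.2.2

end Seq
section Core

variable {M : Type} [PartialOrder M] {B : Bisheaf M} {dim : M → ℕ} {m : ℕ}

/-- Any simplex of `M_d` (for `d < m`) has dimension at most `d`. -/
lemma dim_le_of_mem (hbound : ∀ σ : M, dim σ ≤ m) {d : ℕ} (hd : d < m) {x : M}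
    (hx : x ∈ Mseq B dim m d) : dim x ≤ d := by
  by_contra h
  push_neg at h
  have h1 : d ≤ dim x - 1 := by omega
  have h2 : dim x - 1 < m := by have := hbound x; omega
  have hx' : x ∈ Mseq B dim m (dim x - 1) := Mseq_mono h1 hx
  rw [mem_Mseq_iff h2] at hx'
  exact hx'.2 ⟨x, by omega, isoIn_refl _ _⟩

lemma dim_le_of_mem' (hbound : ∀ σ : M, dim σ ≤ m) {d : ℕ} (hd : d ≤ m) {x : M}
    (hx : x ∈ Mseq B dim m d) : dim x ≤ d := by
  rcases eq_or_lt_of_le hd with h | h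
  · exact h ▸ hbound x
  · exact dim_le_of_mem hbound h hx

/-- Saturation: an isomorphism in `Fc_{W_e}(M)` between simplices of `M_e` preserves
membership in every later `M_k`. -/
lemma mem_iff_of_isoIn {e : ℕ} (he : e ≤ m) {σ ρ : M} (hσ : σ ∈ Mseq B dim m e)
    (hρ : ρ ∈ Mseq B dim m e) (h : isoIn (Wseq B dim m e) σ ρ) (k : ℕ) :
    σ ∈ Mseq B dim m k ↔ ρ ∈ Mseq B dim m k := by
  have key : ∀ n, σ ∈ Mseq B dim m (e - n) ↔ ρ ∈ Mseq B dim m (e - n) := by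
    intro n
    induction n with
    | zero => exact ⟨fun _ => hρ, fun _ => hσ⟩
    | succ n ih =>
      rcases le_or_gt e n with hn | hn
      · have : e - (n + 1) = e - n := by omega
        rw [this]; exact ih
      · have hlt : e - (n + 1) < m := by omega
        have hs : e - (n + 1) + 1 = e - n := by omega
        have hW : ∀ a b : M, Wseq B dim m e a b → Wseq B dim m (e - (n+1) + 1) a b :=
          Wseq_anti (by omega)
        have hiso : isoIn (Wseq B dim m (e - (n+1) + 1)) σ ρ := isoIn_mono hW h
        rw [mem_Mseq_iff hlt, mem_Mseq_iff hlt, hs]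
        constructor
        · rintro ⟨h1, h2⟩
          refine ⟨ih.1 h1, fun ⟨t, ht1, ht2⟩ => h2 ⟨t, ht1, ?_⟩⟩
          exact isoIn_trans (hs ▸ hiso) ht2
        · rintro ⟨h1, h2⟩
          refine ⟨ih.2 h1, fun ⟨t, ht1, ht2⟩ => h2 ⟨t, ht1, ?_⟩⟩
          exact isoIn_trans (isoIn_symm (hs ▸ hiso)) ht2
  rcases le_or_gt e k with hk | hk
  · constructor
    · exact fun _ => Mseq_mono hk hρ
    · exact fun _ => Mseq_mono hk hσ
  · have : k = e - (e - k) := by omega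
    rw [this]
    exact key (e - k)

/-- Chains of `W_d`-arrows preserve membership in every `M_k`. -/
lemma mem_iff_of_eqvGen {d : ℕ} (hd : d ≤ m) {σ τ : M}
    (h : Relation.EqvGen (Wseq B dim m d) σ τ) (k : ℕ) :
    σ ∈ Mseq B dim m k ↔ τ ∈ Mseq B dim m k := by
  induction h with
  | rel a b hab =>
    obtain ⟨e, hde, hem, hN⟩ := (Wseq_iff hd).1 hab
    exact mem_iff_of_isoIn hem hN.1.1 hN.2.1
      (isoIn_of_W hN.2.2 (Wseq_of_narrow le_rfl hem hN)) k
  | refl a => exact Iff.rfl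
  | symm a b _ ih => exact ih.symm
  | trans a b c _ _ ih1 ih2 => exact ih1.trans ih2

/-- Stepping backwards along a zigzag step out of `M_d` stays in `M_d`,
assuming `M_d` is closed under faces. -/
lemma step_back {i d : ℕ} (hi : i ≤ d) (hd : d ≤ m)
    (hdc : ∀ x z : M, x ≤ z → z ∈ Mseq B dim m d → x ∈ Mseq B dim m d)
    {x y : M} (hstep : x ≤ y ∨ Wseq B dim m i y x) (hy : y ∈ Mseq B dim m d) :
    x ∈ Mseq B dim m d := by
  rcases hstep with h | h
  · exact hdc x y h hy
  · obtain ⟨e, hie, hem, hN⟩ := (Wseq_iff (hi.trans hd)).1 h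
    rcases le_or_gt d e with hde | hde
    · exact (mem_iff_of_isoIn hem hN.1.1 hN.2.1
        (isoIn_of_W hN.2.2 (Wseq_of_narrow le_rfl hem hN)) d).1 hy
    · exact Mseq_mono hde.le hN.2.1

/-- Every vertex of a zigzag ending in `M_d` lies in `M_d`. -/
lemma reach_mem {i d : ℕ} (hi : i ≤ d) (hd : d ≤ m)
    (hdc : ∀ x z : M, x ≤ z → z ∈ Mseq B dim m d → x ∈ Mseq B dim m d)
    {x y : M} (h : ReachRel (Wseq B dim m i) x y) (hy : y ∈ Mseq B dim m d) :
    x ∈ Mseq B dim m d := by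
  induction h using Relation.ReflTransGen.head_induction_on with
  | refl => exact hy
  | head hstep _ ih => exact step_back hi hd hdc hstep ih

/-- The key invariant carried along zigzags out of a top-dimensional simplex `τ` of `M_d`. -/
def Jinv (B : Bisheaf M) (dim : M → ℕ) (m d : ℕ) (τ y : M) : Prop :=
  y = τ ∨ ∃ e, d ≤ e ∧ e ≤ m ∧ ∃ σ : M, σ ∈ Uof B.E (Mseq B dim m e) ∧ σ ≤ y ∧
    Relation.EqvGen (Wseq B dim m d) σ τ

lemma Jinv_eqvGen {d : ℕ} (hd : d ≤ m) {τ y : M} (hy : y ∈ Mseq B dim m d)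
    (hJ : Jinv B dim m d τ y) : Relation.EqvGen (Wseq B dim m d) y τ := by
  rcases hJ with rfl | ⟨e, hde, hem, σ, hσU, hσy, hστ⟩
  · exact Relation.EqvGen.refl y
  · have hw : Wseq B dim m d σ y :=
      Wseq_of_narrow hde hem ⟨hσU, Mseq_mono hde hy, hσy⟩
    exact ((Relation.EqvGen.rel _ _ hw).symm _ _).trans _ _ _ hστ

/-- The main induction: the invariant propagates along zigzags within `M_d`. -/
lemma ph2 (hstrict : ∀ σ' τ' : M, σ' < τ' → dim σ' < dim τ')
    (hbound : ∀ σ : M, dim σ ≤ m) {i d : ℕ} (hi : i ≤ d) (hd : d ≤ m)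
    (hdc : ∀ x z : M, x ≤ z → z ∈ Mseq B dim m d → x ∈ Mseq B dim m d)
    {τ : M} (hτM : τ ∈ Mseq B dim m d) (hτd : dim τ = d) :
    ∀ y : M, ReachRel (Wseq B dim m i) τ y → y ∈ Mseq B dim m d →
      Jinv B dim m d τ y := by
  intro y h
  induction h with
  | refl => exact fun _ => Or.inl rfl
  | tail hreach hstep ih =>
    rename_i b c
    intro hc
    have hb : b ∈ Mseq B dim m d := step_back hi hd hdc hstep hc
    have hJb : Jinv B dim m d τ b := ih hb
    rcases hstep with hbc | hW
    · -- up-step b ≤ c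
      rcases hJb with rfl | ⟨e, hde, hem, σ, hσU, hσb, hστ⟩
      · -- b = τ
        rcases eq_or_lt_of_le hbc with rfl | hlt
        · exact Or.inl rfl
        · have h1 : dim c ≤ d := dim_le_of_mem' hbound hd hc
          have h2 : dim b < dim c := hstrict _ _ hlt
          omega
      · exact Or.inr ⟨e, hde, hem, σ, hσU, hσb.trans hbc, hστ⟩
    · -- down-step along a `W_i`-arrow `c ⟶ b`
      obtain ⟨e', hie', he'm, hcU, hbM', hcb⟩ := (Wseq_iff (hi.trans hd)).1 hW
      rcases le_or_gt d e' with hde' | hde'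
      · -- the arrow was added at a late stage: it is a `W_d`-arrow
        have hwcb : Wseq B dim m d c b := Wseq_of_narrow hde' he'm ⟨hcU, hbM', hcb⟩
        have hbτ : Relation.EqvGen (Wseq B dim m d) b τ := by
          rcases hJb with rfl | ⟨e, hde, hem, σ, hσU, hσb, hστ⟩
          · exact Relation.EqvGen.refl b
          · have hw : Wseq B dim m d σ b :=
              Wseq_of_narrow hde hem ⟨hσU, Mseq_mono hde hb, hσb⟩
            exact ((Relation.EqvGen.rel _ _ hw).symm _ _).trans _ _ _ hστ
        exact Or.inr ⟨e', hde', he'm, c, hcU, le_rfl,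
          (Relation.EqvGen.rel _ _ hwcb).trans _ _ _ hbτ⟩
      · -- the arrow was added at an early stage: impossible
        exfalso
        have he'm' : e' < m := lt_of_lt_of_le hde' hd
        rcases hJb with rfl | ⟨e, hde, hem, σ, hσU, hσb, hστ⟩
        · -- b = τ lies in M_{e'} with e' < d = dim τ
          have : dim b ≤ e' := dim_le_of_mem hbound he'm' hbM'
          omega
        · have hbMe : b ∈ Mseq B dim m e := Mseq_mono (by omega) hbM'
          have hw : Wseq B dim m d σ b :=
            Wseq_of_narrow hde hem ⟨hσU, hbMe, hσb⟩
          have hEq : Relation.EqvGen (Wseq B dim m d) b τ :=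
            ((Relation.EqvGen.rel _ _ hw).symm _ _).trans _ _ _ hστ
          have hτe' : τ ∈ Mseq B dim m e' := (mem_iff_of_eqvGen hd hEq e').1 hbM'
          have : dim τ ≤ e' := dim_le_of_mem hbound he'm' hτe'
          omega

/-- Each `M_d` is a subcomplex: it is closed under passing to faces. -/
lemma Mseq_downclosed (hstrict : ∀ σ' τ' : M, σ' < τ' → dim σ' < dim τ')
    (hbound : ∀ σ : M, dim σ ≤ m) :
    ∀ d : ℕ, ∀ x z : M, x ≤ z → z ∈ Mseq B dim m d → x ∈ Mseq B dim m d := by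
  have key : ∀ n d, m - d ≤ n → ∀ x z : M, x ≤ z →
      z ∈ Mseq B dim m d → x ∈ Mseq B dim m d := by
    intro n
    induction n with
    | zero =>
      intro d hn x z hxz hz
      rw [Mseq_eq_univ (by omega)]
      trivial
    | succ n ih =>
      intro d hn x z hxz hz
      rcases le_or_gt m d with hmd | hdm
      · rw [Mseq_eq_univ hmd]; trivial
      · have hdc1 : ∀ x z : M, x ≤ z → z ∈ Mseq B dim m (d + 1) → x ∈ Mseq B dim m (d + 1) :=
          ih (d + 1) (by omega)
        have hz1 := (mem_Mseq_iff hdm).1 hz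
        have hx1 : x ∈ Mseq B dim m (d + 1) := hdc1 x z hxz hz1.1
        rw [mem_Mseq_iff hdm]
        refine ⟨hx1, ?_⟩
        rintro ⟨ρ, hρd, hiso⟩
        have hd1m : d + 1 ≤ m := hdm
        have hreach : ReachRel (Wseq B dim m (d + 1)) ρ x :=
          reach_of_isoIn (isoIn_symm hiso)
        have hρM : ρ ∈ Mseq B dim m (d + 1) :=
          reach_mem le_rfl hd1m hdc1 hreach hx1
        have hJ := ph2 hstrict hbound le_rfl hd1m hdc1 hρM hρd x hreach hx1
        rcases hJ with rfl | ⟨e, hde, hem, σ, hσU, hσx, hσρ⟩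
        · -- x = ρ has dimension d+1 but is a face of z ∈ M_d
          have hzd : dim z ≤ d := dim_le_of_mem hbound hdm hz
          rcases eq_or_lt_of_le hxz with rfl | hlt
          · omega
          · have := hstrict _ _ hlt
            omega
        · have hzMe : z ∈ Mseq B dim m e := Mseq_mono (by omega) hz
          have hw : Wseq B dim m (d + 1) σ z :=
            Wseq_of_narrow hde hem ⟨hσU, hzMe, hσx.trans hxz⟩
          have hEq : Relation.EqvGen (Wseq B dim m (d + 1)) z ρ :=
            ((Relation.EqvGen.rel _ _ hw).symm _ _).trans _ _ _ hσρ
          have hρMd : ρ ∈ Mseq B dim m d := (mem_iff_of_eqvGen hd1m hEq d).1 hz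
          have : dim ρ ≤ d := dim_le_of_mem hbound hdm hρMd
          omega
  exact fun d => key (m - d) d le_rfl

/-- A chain of `W`-arrows gives an isomorphism in the localization. -/
lemma isoIn_of_eqvGen {W : M → M → Prop} (hle : ∀ a b, W a b → a ≤ b) {σ τ : M}
    (h : Relation.EqvGen W σ τ) : isoIn W σ τ := by
  induction h with
  | rel a b hab => exact isoIn_of_W (hle a b hab) hab
  | refl a => exact isoIn_refl W a
  | symm a b _ ih => exact isoIn_symm ih
  | trans a b c _ _ ih1 ih2 => exact isoIn_trans ih1 ih2

end Core
/-- for `i ≤ d`, two `d`-dimensional simplices of `M_d` are isomorphic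
in `Fc_{W_d}(M)` if and only if they are isomorphic in `Fc_{W_i}(M)`; in particular
(taking `i = 0`) the isomorphism classes of `d`-simplices of `M_d` are the same
computed in `Fc_{W_d}(M)` or in `Fc_{W_0}(M)`. -/
theorem iso_classes_stable (B : Bisheaf M) (dim : M → ℕ) (m : ℕ)
    (hstrict : ∀ σ τ : M, σ < τ → dim σ < dim τ)
    (hbound : ∀ σ : M, dim σ ≤ m)
    (i d : ℕ) (hid : i ≤ d) (hdm : d ≤ m)
    {τ τ' : M} (hτ : τ ∈ Mseq B dim m d) (hτ' : τ' ∈ Mseq B dim m d)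
    (hdτ : dim τ = d) (hdτ' : dim τ' = d) :
    isoIn (Wseq B dim m d) τ τ' ↔ isoIn (Wseq B dim m i) τ τ' := by
  constructor
  · exact isoIn_mono (Wseq_anti hid)
  · intro h
    have hdc := Mseq_downclosed (B := B) hstrict hbound d
    have hreach : ReachRel (Wseq B dim m i) τ τ' := reach_of_isoIn h
    have hJ := ph2 hstrict hbound hid hdm hdc hτ hdτ τ' hreach hτ'
    have hEq : Relation.EqvGen (Wseq B dim m d) τ' τ := Jinv_eqvGen hdm hτ' hJ
    exact isoIn_of_eqvGen (fun a b hab => Wseq_le_rel hdm hab) (hEq.symm _ _)
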